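/- arXiv:1902.02625 — 5 statements merged into one kernel-verified Lean document; each statement's English description precedes it below -/
import Mathlib

section
/- For any positive integers k and m, the number of k-multipartitions of m is at most (k+1) times the number of k-multipartitions of m-1, i.e., p_k(m) ≤ (k+1)·p_k(m-1). -/
open Multiset

/-- Number of `k`-multipartitions of `m`: `k`-tuples of partitions with total size `m`. -/
noncomputable def pk (k m : ℕ) : ℕ :=
  Nat.card { f : Fin k → Σ j : ℕ, Nat.Partition j // ∑ i, (f i).1 = m }

namespace MPaux

lemma sigma_ext {a b : Σ j : ℕ, Nat.Partition j} (h : a.2.parts = b.2.parts) : a = b := by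
  obtain ⟨j, p⟩ := a; obtain ⟨j', p'⟩ := b
  have hj : j = j' := by rw [← p.parts_sum, ← p'.parts_sum, h]
  subst hj
  exact congrArg (Sigma.mk j) (Nat.Partition.ext h)

lemma fst_pos {p : Σ j : ℕ, Nat.Partition j} (hne : p.2.parts ≠ 0) : 1 ≤ p.1 := by
  obtain ⟨a, ha⟩ := Multiset.exists_mem_of_ne_zero hne
  have h1 := p.2.parts_pos ha
  have h2 := Multiset.single_le_sum (fun x _ => Nat.zero_le x) a ha
  rw [p.2.parts_sum] at h2
  omega

/-- minimal part -/
noncomputable def minVal (p : Σ j : ℕ, Nat.Partition j) (hne : p.2.parts ≠ 0) : ℕ :=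
  p.2.parts.toFinset.min' (by simpa using hne)

lemma minVal_mem (p : Σ j : ℕ, Nat.Partition j) (hne : p.2.parts ≠ 0) :
    minVal p hne ∈ p.2.parts :=
  Multiset.mem_toFinset.mp (Finset.min'_mem _ _)

lemma minVal_le (p : Σ j : ℕ, Nat.Partition j) (hne : p.2.parts ≠ 0)
    {x : ℕ} (hx : x ∈ p.2.parts) : minVal p hne ≤ x :=
  Finset.min'_le _ _ (Multiset.mem_toFinset.mpr hx)

lemma minVal_eq (p : Σ j : ℕ, Nat.Partition j) (hne : p.2.parts ≠ 0)
    {a : ℕ} (h1 : a ∈ p.2.parts) (h2 : ∀ x ∈ p.2.parts, a ≤ x) : minVal p hne = a :=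
  le_antisymm (minVal_le p hne h1) (h2 _ (minVal_mem p hne))

/-- remove a part equal to 1 -/
def erase1 (p : Σ j : ℕ, Nat.Partition j) (h : 1 ∈ p.2.parts) : Σ j : ℕ, Nat.Partition j :=
  ⟨p.1 - 1, ⟨p.2.parts.erase 1,
    fun hj => p.2.parts_pos (Multiset.mem_of_mem_erase hj), by
      have h1 := Multiset.sum_erase h
      have h2 := p.2.parts_sum
      omega⟩⟩

lemma erase1_fst (p : Σ j : ℕ, Nat.Partition j) (h : 1 ∈ p.2.parts) :
    (erase1 p h).1 = p.1 - 1 := rfl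

lemma erase1_parts (p : Σ j : ℕ, Nat.Partition j) (h : 1 ∈ p.2.parts) :
    (erase1 p h).2.parts = p.2.parts.erase 1 := rfl

lemma minVal_ge_two (p : Σ j : ℕ, Nat.Partition j) (hne : p.2.parts ≠ 0)
    (h1 : 1 ∉ p.2.parts) : 2 ≤ minVal p hne := by
  have hm := minVal_mem p hne
  have := p.2.parts_pos hm
  have : minVal p hne ≠ 1 := fun h => h1 (h ▸ hm)
  omega

/-- decrement the minimal part by one -/
noncomputable def decMin (p : Σ j : ℕ, Nat.Partition j) (hne : p.2.parts ≠ 0)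
    (h1 : 1 ∉ p.2.parts) : Σ j : ℕ, Nat.Partition j :=
  ⟨p.1 - 1, ⟨(minVal p hne - 1) ::ₘ p.2.parts.erase (minVal p hne), by
      intro i hi
      rcases Multiset.mem_cons.mp hi with h | h
      · have := minVal_ge_two p hne h1
        omega
      · exact p.2.parts_pos (Multiset.mem_of_mem_erase h)
    , by
      have hs := Multiset.sum_erase (minVal_mem p hne)
      have h2 := p.2.parts_sum
      have h3 := minVal_ge_two p hne h1
      rw [Multiset.sum_cons]
      omega⟩⟩

lemma decMin_fst (p : Σ j : ℕ, Nat.Partition j) (hne h1') :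
    (decMin p hne h1').1 = p.1 - 1 := rfl

lemma decMin_parts (p : Σ j : ℕ, Nat.Partition j) (hne h1') :
    (decMin p hne h1').2.parts = (minVal p hne - 1) ::ₘ p.2.parts.erase (minVal p hne) := rfl

/-- reconstruction function inverting `decMin` -/
noncomputable def recon (q : Σ j : ℕ, Nat.Partition j) : Multiset ℕ :=
  if hq : q.2.parts ≠ 0 then (minVal q hq + 1) ::ₘ q.2.parts.erase (minVal q hq) else 0

lemma decMin_recon (p : Σ j : ℕ, Nat.Partition j) (hne : p.2.parts ≠ 0)
    (h1 : 1 ∉ p.2.parts) : recon (decMin p hne h1) = p.2.parts := by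
  have h2 := minVal_ge_two p hne h1
  have hq : (decMin p hne h1).2.parts ≠ 0 := by
    rw [decMin_parts]; exact Multiset.cons_ne_zero
  have hmin : minVal (decMin p hne h1) hq = minVal p hne - 1 := by
    apply minVal_eq
    · rw [decMin_parts]; exact Multiset.mem_cons_self _ _
    · intro x hx
      rw [decMin_parts] at hx
      rcases Multiset.mem_cons.mp hx with h | h
      · omega
      · have := minVal_le p hne (Multiset.mem_of_mem_erase h)
        omega
  rw [recon, dif_pos hq, hmin, decMin_parts, Multiset.erase_cons_head]
  have : minVal p hne - 1 + 1 = minVal p hne := by omega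
  rw [this, Multiset.cons_erase (minVal_mem p hne)]



lemma parts_heq {n n' : ℕ} {p : Nat.Partition n} {q : Nat.Partition n'}
    (hn : n = n') (h : HEq p q) : p.parts = q.parts := by
  subst hn; rw [eq_of_heq h]

instance finS (k m : ℕ) :
    Finite { f : Fin k → Σ j : ℕ, Nat.Partition j // ∑ i, (f i).1 = m } := by
  classical
  let F : { f : Fin k → Σ j : ℕ, Nat.Partition j // ∑ i, (f i).1 = m } →
      (Fin k → Σ j : Fin (m + 1), Nat.Partition j.1) := fun f i =>
    ⟨⟨(f.1 i).1, by
        have h1 : (f.1 i).1 ≤ ∑ j, (f.1 j).1 :=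
          Finset.single_le_sum (f := fun j => (f.1 j).1) (fun j _ => Nat.zero_le _) (Finset.mem_univ i)
        rw [f.2] at h1; omega⟩, (f.1 i).2⟩
  have hF : Function.Injective F := by
    intro f g h
    apply Subtype.ext; funext i
    have h1 : F f i = F g i := congrFun h i
    rw [Sigma.ext_iff] at h1
    obtain ⟨hfst, hsnd⟩ := h1
    apply sigma_ext
    have hv : (f.1 i).1 = (g.1 i).1 := congrArg Fin.val hfst
    -- parts equal
    exact parts_heq (congrArg Fin.val hfst) hsnd
  exact Finite.of_injective F hF

lemma sum_update {k m : ℕ} (f : Fin k → Σ j : ℕ, Nat.Partition j) (hf : ∑ i, (f i).1 = m)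
    (i₀ : Fin k) (q : Σ j : ℕ, Nat.Partition j) (hq : q.1 = (f i₀).1 - 1)
    (hpos : 1 ≤ (f i₀).1) : ∑ i, (Function.update f i₀ q i).1 = m - 1 := by
  classical
  have heq : (fun i => (Function.update f i₀ q i).1) =
      Function.update (fun i => (f i).1) i₀ q.1 := by
    funext j
    exact Function.apply_update (fun _ p => p.1) f i₀ q j
  have h1 : ∑ i, (Function.update f i₀ q i).1 = q.1 + ∑ i ∈ Finset.univ \ {i₀}, (f i).1 := by
    calc ∑ i, (Function.update f i₀ q i).1
        = ∑ i, Function.update (fun i => (f i).1) i₀ q.1 i := by rw [heq]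
      _ = q.1 + ∑ i ∈ Finset.univ \ {i₀}, (f i).1 :=
          Finset.sum_update_of_mem (Finset.mem_univ i₀) _ _
  have h2 : m = (f i₀).1 + ∑ i ∈ Finset.univ \ {i₀}, (f i).1 := by
    rw [← hf]
    exact Finset.sum_eq_add_sum_sdiff_singleton_of_mem (Finset.mem_univ i₀) _
  omega

open scoped Classical

lemma min'_congr {α : Type*} [LinearOrder α] {s t : Finset α} (h : s = t)
    (hs : s.Nonempty) (ht : t.Nonempty) : s.min' hs = t.min' ht := by subst h; rfl

variable {k : ℕ}

noncomputable def idxB (f : Fin k → Σ j : ℕ, Nat.Partition j)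
    (hB : ∃ i, 1 ∈ ((f i).2).parts) : Fin k :=
  (Finset.univ.filter fun i => 1 ∈ ((f i).2).parts).min'
    (Finset.filter_nonempty_iff.mpr ⟨hB.choose, Finset.mem_univ _, hB.choose_spec⟩)

lemma idxB_mem (f : Fin k → Σ j : ℕ, Nat.Partition j) (hB : ∃ i, 1 ∈ ((f i).2).parts) :
    1 ∈ ((f (idxB f hB)).2).parts := by
  have h := Finset.min'_mem (Finset.univ.filter fun i => 1 ∈ ((f i).2).parts)
    (Finset.filter_nonempty_iff.mpr ⟨hB.choose, Finset.mem_univ _, hB.choose_spec⟩)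
  exact (Finset.mem_filter.mp h).2

noncomputable def idxA (f : Fin k → Σ j : ℕ, Nat.Partition j)
    (hA : ∃ i, (f i).2.parts ≠ 0) : Fin k :=
  (Finset.univ.filter fun i => (f i).2.parts ≠ 0).min'
    (Finset.filter_nonempty_iff.mpr ⟨hA.choose, Finset.mem_univ _, hA.choose_spec⟩)

lemma idxA_mem (f : Fin k → Σ j : ℕ, Nat.Partition j) (hA : ∃ i, (f i).2.parts ≠ 0) :
    (f (idxA f hA)).2.parts ≠ 0 := by
  have h := Finset.min'_mem (Finset.univ.filter fun i => (f i).2.parts ≠ 0)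
    (Finset.filter_nonempty_iff.mpr ⟨hA.choose, Finset.mem_univ _, hA.choose_spec⟩)
  exact (Finset.mem_filter.mp h).2

lemma idxA_congr {f g : Fin k → Σ j : ℕ, Nat.Partition j} (h : f = g)
    (hA : ∃ i, (f i).2.parts ≠ 0) (hA' : ∃ i, (g i).2.parts ≠ 0) :
    idxA f hA = idxA g hA' := by subst h; rfl

lemma idxA_eq_of_update (f : Fin k → Σ j : ℕ, Nat.Partition j)
    (hA : ∃ i, (f i).2.parts ≠ 0) (q : Σ j : ℕ, Nat.Partition j) (hq : q.2.parts ≠ 0)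
    (hA' : ∃ i, ((Function.update f (idxA f hA) q i).2.parts ≠ 0)) :
    idxA (Function.update f (idxA f hA) q) hA' = idxA f hA := by
  have hset : (Finset.univ.filter fun i => (Function.update f (idxA f hA) q i).2.parts ≠ 0) =
      (Finset.univ.filter fun i => (f i).2.parts ≠ 0) := by
    ext i
    simp only [Finset.mem_filter, Finset.mem_univ, true_and]
    by_cases hi : i = idxA f hA
    · subst hi
      rw [Function.update_self]
      exact iff_of_true hq (idxA_mem f hA)
    · rw [Function.update_of_ne hi]
  unfold idxA
  exact min'_congr hset _ _

lemma exA {m : ℕ} (hm : 1 ≤ m)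
    (f : { f : Fin k → Σ j : ℕ, Nat.Partition j // ∑ i, (f i).1 = m }) :
    ∃ i, (f.1 i).2.parts ≠ 0 := by
  by_contra hc
  push_neg at hc
  have hz : ∀ i, (f.1 i).1 = 0 := fun i => by
    rw [← (f.1 i).2.parts_sum, hc i, Multiset.sum_zero]
  have h0 : ∑ i, (f.1 i).1 = 0 := Finset.sum_eq_zero fun i _ => hz i
  rw [f.2] at h0
  omega

noncomputable def Phi (k m : ℕ) (hm : 1 ≤ m)
    (f : { f : Fin k → Σ j : ℕ, Nat.Partition j // ∑ i, (f i).1 = m }) :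
    Fin (k + 1) × { f : Fin k → Σ j : ℕ, Nat.Partition j // ∑ i, (f i).1 = m - 1 } :=
  if hB : ∃ i, 1 ∈ ((f.1 i).2).parts then
    ((idxB f.1 hB).castSucc,
      ⟨Function.update f.1 (idxB f.1 hB) (erase1 (f.1 (idxB f.1 hB)) (idxB_mem f.1 hB)),
        sum_update f.1 f.2 _ _ rfl
          (fst_pos (fun h0 => Multiset.notMem_zero 1 (h0 ▸ idxB_mem f.1 hB)))⟩)
  else
    (Fin.last k,
      ⟨Function.update f.1 (idxA f.1 (exA hm f))
          (decMin (f.1 (idxA f.1 (exA hm f))) (idxA_mem f.1 (exA hm f))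
            (fun hmem => hB ⟨_, hmem⟩)),
        sum_update f.1 f.2 _ _ rfl (fst_pos (idxA_mem f.1 (exA hm f)))⟩)

lemma Phi_inj (k m : ℕ) (hm : 1 ≤ m) : Function.Injective (Phi k m hm) := by
  intro f g h
  unfold Phi at h
  by_cases hBf : ∃ i, 1 ∈ ((f.1 i).2).parts <;>
    by_cases hBg : ∃ i, 1 ∈ ((g.1 i).2).parts
  · -- both case B
    rw [dif_pos hBf, dif_pos hBg, Prod.mk.injEq, Subtype.mk.injEq] at h
    obtain ⟨h1, h2⟩ := h
    have hi : idxB f.1 hBf = idxB g.1 hBg := Fin.castSucc_injective _ h1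
    -- equality of the modified components
    have hrhs : Function.update g.1 (idxB g.1 hBg)
        (erase1 (g.1 (idxB g.1 hBg)) (idxB_mem g.1 hBg)) (idxB f.1 hBf)
        = erase1 (g.1 (idxB g.1 hBg)) (idxB_mem g.1 hBg) := by
      rw [hi]; exact Function.update_self _ _ _
    have hq : erase1 (f.1 (idxB f.1 hBf)) (idxB_mem f.1 hBf)
        = erase1 (g.1 (idxB g.1 hBg)) (idxB_mem g.1 hBg) := by
      have hc := congrFun h2 (idxB f.1 hBf)
      rw [Function.update_self] at hc
      exact hc.trans hrhs
    have hp : (f.1 (idxB f.1 hBf)).2.parts.erase 1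
        = (g.1 (idxB g.1 hBg)).2.parts.erase 1 :=
      congrArg (fun p : Σ j : ℕ, Nat.Partition j => p.2.parts) hq
    have hfp : (f.1 (idxB f.1 hBf)).2.parts = (g.1 (idxB g.1 hBg)).2.parts := by
      rw [← Multiset.cons_erase (idxB_mem f.1 hBf),
        ← Multiset.cons_erase (idxB_mem g.1 hBg), hp]
    apply Subtype.ext
    funext j
    by_cases hj : j = idxB f.1 hBf
    · subst hj
      exact sigma_ext (hfp.trans
        (congrArg (fun p : Σ j : ℕ, Nat.Partition j => p.2.parts) (congrArg g.1 hi.symm)))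
    · have hcj := congrFun h2 j
      rwa [Function.update_of_ne hj, Function.update_of_ne (fun hc => hj (hc.trans hi.symm))]
        at hcj
  · -- f in B, g in A: impossible
    rw [dif_pos hBf, dif_neg hBg] at h
    have h1 : Fin.castSucc (idxB f.1 hBf) = Fin.last k := congrArg Prod.fst h
    exact absurd h1 (Fin.castSucc_lt_last _).ne
  · rw [dif_neg hBf, dif_pos hBg] at h
    have h1 : Fin.last k = Fin.castSucc (idxB g.1 hBg) := congrArg Prod.fst h
    exact absurd h1.symm (Fin.castSucc_lt_last _).ne
  · -- both case A
    rw [dif_neg hBf, dif_neg hBg, Prod.mk.injEq, Subtype.mk.injEq] at h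
    obtain ⟨-, h2⟩ := h
    set qf := decMin (f.1 (idxA f.1 (exA hm f))) (idxA_mem f.1 (exA hm f))
      (fun hmem => hBf ⟨_, hmem⟩) with hqf
    set qg := decMin (g.1 (idxA g.1 (exA hm g))) (idxA_mem g.1 (exA hm g))
      (fun hmem => hBg ⟨_, hmem⟩) with hqg
    have hqfne : qf.2.parts ≠ 0 := by rw [hqf, decMin_parts]; exact Multiset.cons_ne_zero
    have hqgne : qg.2.parts ≠ 0 := by rw [hqg, decMin_parts]; exact Multiset.cons_ne_zero
    have hwf : ∃ i, ((Function.update f.1 (idxA f.1 (exA hm f)) qf i).2.parts ≠ 0) :=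
      ⟨idxA f.1 (exA hm f), by rw [Function.update_self]; exact hqfne⟩
    have hwg : ∃ i, ((Function.update g.1 (idxA g.1 (exA hm g)) qg i).2.parts ≠ 0) :=
      ⟨idxA g.1 (exA hm g), by rw [Function.update_self]; exact hqgne⟩
    have e1 := idxA_eq_of_update f.1 (exA hm f) qf hqfne hwf
    have e2 := idxA_eq_of_update g.1 (exA hm g) qg hqgne hwg
    have hi : idxA f.1 (exA hm f) = idxA g.1 (exA hm g) :=
      e1.symm.trans ((idxA_congr h2 hwf hwg).trans e2)
    have hrhs : Function.update g.1 (idxA g.1 (exA hm g)) qg (idxA f.1 (exA hm f)) = qg := by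
      rw [hi]; exact Function.update_self _ _ _
    have hq : qf = qg := by
      have hc := congrFun h2 (idxA f.1 (exA hm f))
      rw [Function.update_self] at hc
      exact hc.trans hrhs
    have hp : recon qf = recon qg := congrArg recon hq
    rw [hqf, hqg, decMin_recon, decMin_recon] at hp
    apply Subtype.ext
    funext j
    by_cases hj : j = idxA f.1 (exA hm f)
    · subst hj
      exact sigma_ext (hp.trans
        (congrArg (fun p : Σ j : ℕ, Nat.Partition j => p.2.parts) (congrArg g.1 hi.symm)))
    · have hcj := congrFun h2 j
      rwa [Function.update_of_ne hj, Function.update_of_ne (fun hc => hj (hc.trans hi.symm))]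
        at hcj

end MPaux

theorem multipartition_recursion (k m : ℕ) (hk : 1 ≤ k) (hm : 1 ≤ m) :
    pk k m ≤ (k + 1) * pk k (m - 1) := by
  have h1 := Nat.card_le_card_of_injective _ (MPaux.Phi_inj k m hm)
  rw [Nat.card_prod, Nat.card_eq_fintype_card (α := Fin (k + 1)), Fintype.card_fin] at h1
  exact h1
end

section
/- For any integers 1 ≤ k ≤ n, the number of partitions of n that are not k-cores satisfies p(n) − c_k(n) ≤ (k+1)·p(n−k), where p denotes the partition function and c_k(n) the number of k-core partitions of n. -/
/-- Number of partitions of `n`. -/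
noncomputable def pfun (n : ℕ) : ℕ := Nat.card (Nat.Partition n)

/-- The `i`-th largest part of a partition's multiset of parts (0-indexed, 0 if absent). -/
def partNth (μ : Multiset ℕ) (i : ℕ) : ℕ := (μ.sort (· ≥ ·)).getD i 0

/-- Hook length at cell `(i, j)` (0-indexed) of the Young diagram of `μ`. -/
def hookLen (μ : Multiset ℕ) (i j : ℕ) : ℕ :=
  (partNth μ i - j) + ((μ.filter (fun x => j < x)).card - i) - 1

/-- A partition is a `k`-core if no hook length is divisible by `k`. -/
def IsCore (k : ℕ) {n : ℕ} (α : Nat.Partition n) : Prop :=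
  ∀ i j, j < partNth α.parts i → ¬ (k ∣ hookLen α.parts i j)

/-- Number of `k`-core partitions of `n`. -/
noncomputable def ck (k n : ℕ) : ℕ := Nat.card {α : Nat.Partition n // IsCore k α}



open Finset

namespace NCB


/-- For a `≥`-sorted list of naturals, `j < l.getD i 0 ↔ i < countP (j < ·)`. -/
lemma sorted_getD_iff {j : ℕ} : ∀ {l : List ℕ}, l.Pairwise (· ≥ ·) →
    ∀ i, j < l.getD i 0 ↔ i < l.countP (fun x => decide (j < x)) := by
  intro l
  induction l with
  | nil => intro _ i; simp
  | cons a t ih =>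
    intro hs i
    rw [List.pairwise_cons] at hs
    obtain ⟨ha, hts⟩ := hs
    have hcount : (a :: t).countP (fun x => decide (j < x)) =
        t.countP (fun x => decide (j < x)) + (if j < a then 1 else 0) := by
      rw [List.countP_cons]; simp
    cases i with
    | zero =>
      rw [List.getD_cons_zero, hcount]
      by_cases hja : j < a
      · rw [if_pos hja]; omega
      · have h0 : t.countP (fun x => decide (j < x)) = 0 := by
          rw [List.countP_eq_zero]
          intro x hx
          simp only [decide_eq_true_eq]
          exact fun hjx => hja (lt_of_lt_of_le hjx (ha x hx))
        rw [if_neg hja, h0]; omega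
    | succ i =>
      rw [List.getD_cons_succ, hcount]
      by_cases hja : j < a
      · rw [ih hts i, if_pos hja]; omega
      · have h0 : t.countP (fun x => decide (j < x)) = 0 := by
          rw [List.countP_eq_zero]
          intro x hx
          simp only [decide_eq_true_eq]
          exact fun hjx => hja (lt_of_lt_of_le hjx (ha x hx))
        have h1 : t.getD i 0 ≤ j := by
          rcases lt_or_ge i t.length with h | h
          · rw [List.getD_eq_getElem _ _ h]
            exact le_trans (ha _ (t.getElem_mem h)) (not_lt.mp hja)
          · rw [List.getD_eq_default _ _ h]; omega
        rw [if_neg hja, h0]; omega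

lemma partNth_lt_iff (μ : Multiset ℕ) (j i : ℕ) :
    j < partNth μ i ↔ i < (μ.filter (fun x => j < x)).card := by
  have hs := μ.pairwise_sort (· ≥ ·)
  have h1 := sorted_getD_iff (j := j) hs i
  rw [partNth, h1]
  have h2 : (μ.filter (fun x => j < x)).card
      = (Multiset.sort μ (· ≥ ·)).countP (fun x => decide (j < x)) := by
    conv_lhs => rw [← μ.sort_eq (· ≥ ·)]
    rw [Multiset.filter_coe, Multiset.coe_card, List.countP_eq_length_filter]
  rw [h2]

lemma partNth_anti (μ : Multiset ℕ) {i j : ℕ} (h : i ≤ j) : partNth μ j ≤ partNth μ i := by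
  by_contra hc
  push_neg at hc
  rw [partNth_lt_iff] at hc
  have := (partNth_lt_iff μ (partNth μ i) i).mpr (lt_of_le_of_lt h hc)
  omega



lemma partNth_pos_iff (μ : Multiset ℕ) (hpos : ∀ x ∈ μ, 0 < x) (i : ℕ) :
    0 < partNth μ i ↔ i < μ.card := by
  rw [partNth_lt_iff]
  have : μ.filter (fun x => 0 < x) = μ := Multiset.filter_eq_self.mpr hpos
  rw [this]

/-- Sum of padded parts equals the sum of the multiset. -/
lemma sum_partNth (μ : Multiset ℕ) (N : ℕ) (hN : μ.card ≤ N) :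
    ∑ i ∈ range N, partNth μ i = μ.sum := by
  have hlen : (μ.sort (· ≥ ·)).length = μ.card := Multiset.length_sort _
  have hsum : ∀ l : List ℕ, ∑ i ∈ range l.length, l.getD i 0 = l.sum := by
    intro l
    induction l with
    | nil => simp
    | cons a t ih =>
      rw [List.length_cons, Finset.sum_range_succ', List.sum_cons]
      simp only [List.getD_cons_succ, List.getD_cons_zero]
      rw [ih]; omega
  have h2 : ∑ i ∈ range N, partNth μ i = ∑ i ∈ range (μ.sort (· ≥ ·)).length, partNth μ i := by
    apply (Finset.sum_subset _ _).symm
    · intro x hx; rw [Finset.mem_range] at *; omega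
    · intro x _ hx
      rw [Finset.mem_range, not_lt] at hx
      exact List.getD_eq_default _ _ hx
  rw [h2]
  simp only [partNth]
  rw [hsum (μ.sort (· ≥ ·))]
  conv_rhs => rw [← μ.sort_eq (· ≥ ·)]
  exact (Multiset.sum_coe _).symm

def beta (μ : Multiset ℕ) (N : ℕ) : Finset ℕ :=
  (range N).image (fun i => partNth μ i + (N - 1 - i))

lemma beta_strictAnti (μ : Multiset ℕ) (N : ℕ) {i j : ℕ} (hij : i < j) (hj : j < N) :
    partNth μ j + (N - 1 - j) < partNth μ i + (N - 1 - i) := by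
  have h1 := partNth_anti μ (le_of_lt hij)
  omega

lemma mem_beta {μ : Multiset ℕ} {N s : ℕ} :
    s ∈ beta μ N ↔ ∃ i < N, partNth μ i + (N - 1 - i) = s := by
  simp [beta]

lemma card_beta (μ : Multiset ℕ) (N : ℕ) : (beta μ N).card = N := by
  rw [beta, Finset.card_image_of_injOn, Finset.card_range]
  intro i hi j hj hij
  simp only [Finset.coe_range, Set.mem_Iio] at hi hj
  by_contra hne
  rcases lt_or_gt_of_ne hne with h | h
  · exact absurd hij (ne_of_gt (beta_strictAnti μ N h hj))
  · exact absurd hij (ne_of_lt (beta_strictAnti μ N h hi))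

lemma sum_beta (μ : Multiset ℕ) (N : ℕ) (hN : μ.card ≤ N) :
    (beta μ N).sum id = μ.sum + ∑ i ∈ range N, i := by
  rw [beta, Finset.sum_image]
  · have h1 : ∑ i ∈ range N, (partNth μ i + (N - 1 - i))
        = (∑ i ∈ range N, partNth μ i) + ∑ i ∈ range N, (N - 1 - i) := by
      rw [Finset.sum_add_distrib]
    have h2 : ∑ i ∈ range N, (N - 1 - i) = ∑ i ∈ range N, i := by
      rw [← Finset.sum_range_reflect]
      apply Finset.sum_congr rfl
      intro j hj
      rw [Finset.mem_range] at hj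
      omega
    simp only [id]
    rw [h1, h2, sum_partNth μ N hN]
  · intro i hi j hj hij
    simp only [Finset.coe_range, Set.mem_Iio] at hi hj
    by_contra hne
    rcases lt_or_gt_of_ne hne with h | h
    · exact absurd hij (ne_of_gt (beta_strictAnti μ N h hj))
    · exact absurd hij (ne_of_lt (beta_strictAnti μ N h hi))

/-- The explicit descending list of the beta set. -/
lemma beta_sort (μ : Multiset ℕ) (N : ℕ) :
    (beta μ N).sort (· ≥ ·) = (List.range N).map (fun i => partNth μ i + (N - 1 - i)) := by
  refine (fun hp h1 h2 => List.Perm.eq_of_pairwise' (r := (· ≥ ·)) h1 h2 hp) ?_ ?_ ?_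
  · have hnd : ((List.range N).map (fun i => partNth μ i + (N - 1 - i))).Nodup := by
      rw [List.nodup_map_iff_inj_on (List.nodup_range (n := N))]
      intro i hi j hj hij
      rw [List.mem_range] at hi hj
      by_contra hne
      rcases lt_or_gt_of_ne hne with h | h
      · exact absurd hij (ne_of_gt (beta_strictAnti μ N h hj))
      · exact absurd hij (ne_of_lt (beta_strictAnti μ N h hi))
    rw [List.perm_ext_iff_of_nodup (Finset.sort_nodup _ _) hnd]
    intro a
    rw [Finset.mem_sort, mem_beta]
    simp only [List.mem_map, List.mem_range]
  · exact Finset.pairwise_sort _ _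
  · rw [List.pairwise_map]
    have := List.pairwise_lt_range (n := N)
    apply List.Pairwise.imp_of_mem (l := List.range N) _ this
    intro i j hi hj hij
    rw [List.mem_range] at hi hj
    exact le_of_lt (beta_strictAnti μ N hij hj)

/-- beta is injective on multisets of positive parts with card ≤ N. -/
lemma beta_inj {μ μ' : Multiset ℕ} {N : ℕ}
    (hpos : ∀ x ∈ μ, 0 < x) (hpos' : ∀ x ∈ μ', 0 < x)
    (hc : μ.card ≤ N) (hc' : μ'.card ≤ N)
    (h : beta μ N = beta μ' N) : μ = μ' := by
  have hs : (List.range N).map (fun i => partNth μ i + (N - 1 - i))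
      = (List.range N).map (fun i => partNth μ' i + (N - 1 - i)) := by
    rw [← beta_sort, ← beta_sort, h]
  have hNth : ∀ i, partNth μ i = partNth μ' i := by
    intro i
    rcases lt_or_ge i N with hi | hi
    · have hi1 : i < ((List.range N).map (fun i => partNth μ i + (N - 1 - i))).length := by
        simpa using hi
      have hi2 : i < ((List.range N).map (fun i => partNth μ' i + (N - 1 - i))).length := by
        simpa using hi
      have h1 := congrArg (fun l => l.getD i 0) hs
      rw [List.getD_eq_getElem _ _ hi1, List.getD_eq_getElem _ _ hi2] at h1
      simp only [List.getElem_map, List.getElem_range] at h1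
      omega
    · have e1 : partNth μ i = 0 := by
        by_contra hne
        have := (partNth_pos_iff μ hpos i).mp (Nat.pos_of_ne_zero hne)
        omega
      have e2 : partNth μ' i = 0 := by
        by_contra hne
        have := (partNth_pos_iff μ' hpos' i).mp (Nat.pos_of_ne_zero hne)
        omega
      rw [e1, e2]
  -- equal sorted lists
  have hcard : μ.card = μ'.card := by
    have f1 : ∀ (ν : Multiset ℕ), (∀ x ∈ ν, 0 < x) → ν.card ≤ N →
        ν.card = ((range N).filter (fun i => 0 < partNth ν i)).card := by
      intro ν hp hcN
      have : (range N).filter (fun i => 0 < partNth ν i) = range ν.card := by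
        ext i
        simp only [Finset.mem_filter, Finset.mem_range]
        rw [partNth_pos_iff ν hp]
        omega
      rw [this, Finset.card_range]
    rw [f1 μ hpos hc, f1 μ' hpos' hc']
    congr 1
    apply Finset.filter_congr
    intro i _
    rw [hNth i]
  have hlist : μ.sort (· ≥ ·) = μ'.sort (· ≥ ·) := by
    apply List.ext_getElem
    · rw [Multiset.length_sort, Multiset.length_sort, hcard]
    · intro i h1 h2
      have g1 : (μ.sort (· ≥ ·))[i] = partNth μ i := (List.getD_eq_getElem _ _ h1).symm
      have g2 : (μ'.sort (· ≥ ·))[i] = partNth μ' i := (List.getD_eq_getElem _ _ h2).symm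
      rw [g1, g2, hNth i]
  calc μ = ↑(μ.sort (· ≥ ·)) := (μ.sort_eq _).symm
    _ = ↑(μ'.sort (· ≥ ·)) := by rw [hlist]
    _ = μ' := μ'.sort_eq _


lemma sum_getD : ∀ l : List ℕ, ∑ i ∈ range l.length, l.getD i 0 = l.sum := by
  intro l
  induction l with
  | nil => simp
  | cons a t ih =>
    rw [List.length_cons, Finset.sum_range_succ', List.sum_cons]
    simp only [List.getD_cons_succ, List.getD_cons_zero]
    rw [ih]; omega

lemma list_range_map_sum (f : ℕ → ℕ) (N : ℕ) :
    ((List.range N).map f).sum = ∑ i ∈ range N, f i := by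
  induction N with
  | zero => simp
  | succ n ih => rw [List.range_succ, Finset.sum_range_succ]; simp [ih]

/-- strictly descending list of naturals: i-th entry at least length-1-i -/
lemma strict_desc_ge : ∀ (l : List ℕ), l.Pairwise (· > ·) →
    ∀ i (h : i < l.length), l.length - 1 - i ≤ l[i] := by
  intro l
  induction l with
  | nil => intro _ i h; simp at h
  | cons a t ih =>
    intro hp i h
    rw [List.pairwise_cons] at hp
    obtain ⟨ha, ht⟩ := hp
    cases i with
    | zero =>
      simp only [List.getElem_cons_zero, List.length_cons]
      rcases Nat.eq_zero_or_pos t.length with h0 | h0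
      · omega
      · have h1 := ih ht 0 h0
        have h2 := ha _ (t.getElem_mem h0)
        omega
    | succ i =>
      simp only [List.getElem_cons_succ, List.length_cons]
      have := ih ht i (by simpa using h)
      omega

lemma sorted_filter_getD : ∀ (l : List ℕ), l.Pairwise (· ≥ ·) →
    ∀ i, (l.filter (fun x => decide (0 < x))).getD i 0 = l.getD i 0 := by
  intro l
  induction l with
  | nil => intro _ i; simp
  | cons a t ih =>
    intro hs i
    rw [List.pairwise_cons] at hs
    obtain ⟨ha, ht⟩ := hs
    by_cases h0 : 0 < a
    · rw [List.filter_cons_of_pos (by simpa using h0)]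
      cases i with
      | zero => simp
      | succ i => simp only [List.getD_cons_succ]; exact ih ht i
    · have ha0 : a = 0 := by omega
      have htz : ∀ x ∈ t, x = 0 := fun x hx => by have := ha x hx; omega
      have hf : (a :: t).filter (fun x => decide (0 < x)) = [] := by
        rw [List.filter_eq_nil_iff]
        intro x hx
        rcases List.mem_cons.mp hx with h | h
        · subst h; simp [ha0]
        · simp [htz x h]
      rw [hf]
      have : (a :: t).getD i 0 = 0 := by
        rcases lt_or_ge i (a :: t).length with h | h
        · rw [List.getD_eq_getElem _ _ h]
          have := List.getElem_mem h
          rcases List.mem_cons.mp this with h1 | h1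
          · omega
          · exact htz _ h1
        · rw [List.getD_eq_default _ _ h]
      rw [this]; simp

section ToPart
variable (T : Finset ℕ) (N : ℕ)

/-- the descending sorted list of a finset -/
def slist : List ℕ := T.sort (· ≥ ·)

lemma slist_sorted : (slist T).Pairwise (· ≥ ·) := Finset.pairwise_sort _ _

lemma slist_strict : (slist T).Pairwise (· > ·) := by
  have h1 := Finset.pairwise_sort T (· ≥ ·)
  have h2 := Finset.sort_nodup T (· ≥ ·)
  have := List.Pairwise.and h1 h2
  apply this.imp
  intro a b hab
  omega

lemma slist_length : (slist T).length = T.card := Finset.length_sort _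

lemma slist_getD_ge (hc : T.card = N) {i : ℕ} (hi : i < N) :
    N - 1 - i ≤ (slist T).getD i 0 := by
  have hl : (slist T).length = N := by rw [slist_length, hc]
  have h := strict_desc_ge (slist T) (slist_strict T) i (by omega)
  rw [List.getD_eq_getElem _ _ (by omega)]
  omega

/-- the i-th padded part of the partition associated to T -/
def qfun (i : ℕ) : ℕ := (slist T).getD i 0 - (N - 1 - i)

lemma qfun_anti (hc : T.card = N) : ∀ i j, i ≤ j → qfun T N j ≤ qfun T N i := by
  have step : ∀ i, qfun T N (i + 1) ≤ qfun T N i := by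
    intro i
    unfold qfun
    rcases lt_or_ge (i+1) N with h | h
    · have hl : (slist T).length = N := by rw [slist_length, hc]
      have h1 : (slist T).getD (i+1) 0 < (slist T).getD i 0 := by
        rw [List.getD_eq_getElem _ _ (by omega), List.getD_eq_getElem _ _ (by omega)]
        have := List.pairwise_iff_getElem.mp (slist_strict T) i (i+1) (by omega) (by omega) (by omega)
        omega
      have h2 := slist_getD_ge T N hc (show i+1 < N by omega)
      omega
    · rcases lt_or_ge (i+1) (slist T).length with h2 | h2
      · have hl : (slist T).length = N := by rw [slist_length, hc]
        omega
      · rw [List.getD_eq_default _ _ h2]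
        omega
  intro i j hij
  induction j with
  | zero => have : i = 0 := by omega
            subst this; rfl
  | succ j ihj =>
    rcases Nat.lt_or_ge i (j+1) with h | h
    · exact le_trans (step j) (ihj (by omega))
    · have : i = j + 1 := by omega
      subst this; rfl

/-- the padded parts list -/
def plist : List ℕ := (List.range N).map (qfun T N)

lemma plist_sorted (hc : T.card = N) : (plist T N).Pairwise (· ≥ ·) := by
  rw [plist, List.pairwise_map]
  apply List.Pairwise.imp_of_mem (l := List.range N) _ (List.pairwise_lt_range (n := N))
  intro i j _ _ hij
  exact qfun_anti T N hc i j (le_of_lt hij)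

/-- the parts of the partition associated to T -/
def pmul : Multiset ℕ := ↑((plist T N).filter (fun x => decide (0 < x)))

lemma pmul_pos {x : ℕ} (hx : x ∈ pmul T N) : 0 < x := by
  rw [pmul, Multiset.mem_coe] at hx
  have := List.of_mem_filter hx
  simpa using this

lemma sum_slist (hc : T.card = N) : ∑ i ∈ range N, (slist T).getD i 0 = T.sum id := by
  have hl : (slist T).length = N := by rw [slist_length, hc]
  rw [← hl, sum_getD]
  have h1 : (↑(slist T) : Multiset ℕ) = T.val := Finset.sort_eq _ _
  have : T.sum id = T.val.sum := by
    rw [Finset.sum]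
    simp
  rw [this, ← h1, Multiset.sum_coe]

lemma pmul_sum (hc : T.card = N) {m : ℕ} (hsum : T.sum id = m + ∑ i ∈ range N, i) :
    (pmul T N).sum = m := by
  have h0 : (pmul T N).sum = ((plist T N).filter (fun x => decide (0 < x))).sum := by
    rw [pmul, Multiset.sum_coe]
  have h1 : ∀ l : List ℕ, (l.filter (fun x => decide (0 < x))).sum = l.sum := by
    intro l
    induction l with
    | nil => simp
    | cons a t ih =>
      by_cases h : 0 < a
      · rw [List.filter_cons_of_pos (by simpa using h), List.sum_cons, List.sum_cons, ih]
      · have : a = 0 := by omega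
        rw [List.filter_cons_of_neg (by simpa using h), List.sum_cons, ih, this]
        omega
  have h2 : (plist T N).sum = ∑ i ∈ range N, qfun T N i := by
    rw [plist, list_range_map_sum]
  have h3 : ∑ i ∈ range N, qfun T N i + ∑ i ∈ range N, (N - 1 - i) = ∑ i ∈ range N, (slist T).getD i 0 := by
    rw [← Finset.sum_add_distrib]
    apply Finset.sum_congr rfl
    intro i hi
    rw [Finset.mem_range] at hi
    have := slist_getD_ge T N hc hi
    unfold qfun
    omega
  have h4 : ∑ i ∈ range N, (N - 1 - i) = ∑ i ∈ range N, i := by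
    rw [← Finset.sum_range_reflect]
    apply Finset.sum_congr rfl
    intro j hj
    rw [Finset.mem_range] at hj
    omega
  have h5 := sum_slist T N hc
  rw [h0, h1, h2]
  omega

lemma pmul_partNth (hc : T.card = N) {i : ℕ} (hi : i < N) :
    partNth (pmul T N) i = qfun T N i := by
  have hsort : (pmul T N).sort (· ≥ ·) = (plist T N).filter (fun x => decide (0 < x)) := by
    refine (fun hp h1 h2 => List.Perm.eq_of_pairwise' (r := (· ≥ ·)) h1 h2 hp) ?_ ?_ ?_
    · rw [← Multiset.coe_eq_coe, Multiset.sort_eq, pmul]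
    · exact Multiset.pairwise_sort _ _
    · exact List.Pairwise.filter _ (plist_sorted T N hc)
  rw [partNth, hsort, sorted_filter_getD _ (plist_sorted T N hc), plist]
  have : i < ((List.range N).map (qfun T N)).length := by simpa using hi
  rw [List.getD_eq_getElem _ _ this]
  simp

lemma pmul_card_le (hc : T.card = N) : (pmul T N).card ≤ N := by
  rw [pmul, Multiset.coe_card]
  calc ((plist T N).filter _).length ≤ (plist T N).length := List.length_filter_le _ _
    _ = N := by rw [plist]; simp

/-- roundtrip: beta of the constructed partition gives back T -/
lemma beta_pmul (hc : T.card = N) : beta (pmul T N) N = T := by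
  ext b
  rw [mem_beta]
  have hl : (slist T).length = N := by rw [slist_length, hc]
  constructor
  · rintro ⟨i, hi, he⟩
    rw [pmul_partNth T N hc hi] at he
    have h1 : qfun T N i + (N - 1 - i) = (slist T).getD i 0 := by
      have := slist_getD_ge T N hc hi
      unfold qfun
      omega
    rw [h1] at he
    rw [List.getD_eq_getElem _ _ (by omega)] at he
    have : (slist T)[i] ∈ slist T := List.getElem_mem _
    rw [← he]
    exact (Finset.mem_sort _).mp this
  · intro hb
    have : b ∈ slist T := (Finset.mem_sort _).mpr hb
    obtain ⟨i, hi, he⟩ := List.mem_iff_getElem.mp this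
    refine ⟨i, by omega, ?_⟩
    rw [pmul_partNth T N hc (by omega)]
    have h1 : qfun T N i + (N - 1 - i) = (slist T).getD i 0 := by
      have := slist_getD_ge T N hc (show i < N by omega)
      unfold qfun
      omega
    rw [h1, List.getD_eq_getElem _ _ hi, he]
end ToPart

section Core

variable (k : ℕ)

def Mov (B : Finset ℕ) : Finset ℕ := B.filter (fun s => k ≤ s ∧ s - k ∉ B)
def MovR (B : Finset ℕ) (r : ℕ) : Finset ℕ := (Mov k B).filter (fun s => s % k = r)
def GoodP (B : Finset ℕ) (r : ℕ) : Prop := ∃ s ∈ MovR k B r, ∀ x < s - k, x % k = r → x ∈ B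

instance (B : Finset ℕ) : DecidablePred (GoodP k B) := fun r => by
  unfold GoodP; infer_instance

def GoodSet (B : Finset ℕ) : Finset ℕ := (range k).filter (fun r => GoodP k B r)
def RSet (B : Finset ℕ) : Finset ℕ := (range k).filter (fun r => (MovR k B r).Nonempty)

def rstar (B : Finset ℕ) : ℕ :=
  if h : (GoodSet k B).Nonempty then (GoodSet k B).min' h
  else if h2 : (RSet k B).Nonempty then (RSet k B).min' h2 else 0

def sstar (B : Finset ℕ) : ℕ :=
  if h : (MovR k B (rstar k B)).Nonempty then (MovR k B (rstar k B)).min' h else 0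

def lab (B : Finset ℕ) : ℕ := if (GoodSet k B).Nonempty then rstar k B else k

def PhiT (B : Finset ℕ) : Finset ℕ := insert (sstar k B - k) (B.erase (sstar k B))

lemma mem_movR {B : Finset ℕ} {r s : ℕ} :
    s ∈ MovR k B r ↔ s ∈ B ∧ k ≤ s ∧ s - k ∉ B ∧ s % k = r := by
  simp only [MovR, Mov, Finset.mem_filter]
  tauto

lemma sub_mod_eq {k t : ℕ} (h : k ≤ t) : (t - k) % k = t % k := by
  obtain ⟨d, hd⟩ : ∃ d, t = d + k := ⟨t - k, by omega⟩
  subst hd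
  rw [Nat.add_sub_cancel, Nat.add_mod_right]

/-- residues: same residue and strictly bigger means at least k bigger -/
lemma mod_step {k a b : ℕ} (hab : a < b) (hmod : a % k = b % k) : a + k ≤ b := by
  have h1 : a ≡ b [MOD k] := hmod
  have h2 : k ∣ b - a := (Nat.modEq_iff_dvd' (le_of_lt hab)).mp h1
  obtain ⟨c, hc⟩ := h2
  rcases Nat.eq_zero_or_pos c with h | h
  · rw [h, Nat.mul_zero] at hc
    omega
  · have h4 : k ≤ k * c := le_trans (le_of_eq (Nat.mul_one k).symm) (Nat.mul_le_mul_left k h)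
    omega

/-- Case A recovery function -/
def recA (k r : ℕ) (T : Finset ℕ) : ℕ :=
  if h : (T.filter (fun t => t % k = r ∧ ∀ x ≤ t, x % k = r → x ∈ T)).Nonempty
  then (T.filter (fun t => t % k = r ∧ ∀ x ≤ t, x % k = r → x ∈ T)).max' h else 0

variable {k}
variable (hk : 0 < k) {B : Finset ℕ} (hM : (Mov k B).Nonempty)

section specs
include hk hM

lemma RSet_nonempty : (RSet k B).Nonempty := by
  obtain ⟨s, hs⟩ := hM
  refine ⟨s % k, ?_⟩
  rw [RSet, Finset.mem_filter, Finset.mem_range]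
  refine ⟨Nat.mod_lt _ hk, ⟨s, ?_⟩⟩
  rw [mem_movR]
  rw [Mov, Finset.mem_filter] at hs
  tauto

lemma rstar_lt : rstar k B < k := by
  rw [rstar]
  split_ifs with h1 h2
  · have := (GoodSet k B).min'_mem h1
    unfold GoodSet at this
    rw [Finset.mem_filter, Finset.mem_range] at this
    exact this.1
  · have := (RSet k B).min'_mem h2
    unfold RSet at this
    rw [Finset.mem_filter, Finset.mem_range] at this
    exact this.1
  · exact absurd (RSet_nonempty hk hM) h2

lemma movR_rstar_nonempty : (MovR k B (rstar k B)).Nonempty := by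
  rw [rstar]
  split_ifs with h1 h2
  · have := (GoodSet k B).min'_mem h1
    unfold GoodSet at this
    rw [Finset.mem_filter] at this
    obtain ⟨s, hs, _⟩ := this.2
    exact ⟨s, hs⟩
  · have := (RSet k B).min'_mem h2
    unfold RSet at this
    rw [Finset.mem_filter] at this
    exact this.2
  · exact absurd (RSet_nonempty hk hM) h2

lemma sstar_mem : sstar k B ∈ MovR k B (rstar k B) := by
  rw [sstar, dif_pos (movR_rstar_nonempty hk hM)]
  exact Finset.min'_mem _ _

lemma sstar_min : ∀ s' ∈ MovR k B (rstar k B), sstar k B ≤ s' := by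
  rw [sstar, dif_pos (movR_rstar_nonempty hk hM)]
  exact fun s' hs' => Finset.min'_le _ _ hs'

lemma sstar_in_B : sstar k B ∈ B := ((mem_movR k).mp (sstar_mem hk hM)).1
lemma k_le_sstar : k ≤ sstar k B := ((mem_movR k).mp (sstar_mem hk hM)).2.1
lemma sstar_sub_not : sstar k B - k ∉ B := ((mem_movR k).mp (sstar_mem hk hM)).2.2.1
lemma sstar_mod : sstar k B % k = rstar k B := ((mem_movR k).mp (sstar_mem hk hM)).2.2.2

lemma sstar_sub_mod : (sstar k B - k) % k = rstar k B := by
  have h1 := k_le_sstar hk hM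
  have h2 := sstar_mod hk hM
  obtain ⟨d, hd⟩ : ∃ d, sstar k B = d + k := ⟨sstar k B - k, by omega⟩
  rw [hd] at h2 ⊢
  rw [Nat.add_sub_cancel]
  rw [Nat.add_mod_right] at h2
  exact h2

/-- generic recovery of B from (sstar, PhiT) -/
lemma phiT_recover : B = insert (sstar k B) ((PhiT k B).erase (sstar k B - k)) := by
  rw [PhiT, Finset.erase_insert, Finset.insert_erase (sstar_in_B hk hM)]
  intro hmem
  exact (sstar_sub_not hk hM) (Finset.mem_of_mem_erase hmem)

lemma phiT_card : (PhiT k B).card = B.card := by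
  have h1 : sstar k B - k ∉ B.erase (sstar k B) := fun h =>
    (sstar_sub_not hk hM) (Finset.mem_of_mem_erase h)
  rw [PhiT, Finset.card_insert_of_notMem h1, Finset.card_erase_of_mem (sstar_in_B hk hM)]
  have : 0 < B.card := Finset.card_pos.mpr ⟨_, sstar_in_B hk hM⟩
  omega

lemma phiT_sum : (PhiT k B).sum id + k = B.sum id := by
  have h1 : sstar k B - k ∉ B.erase (sstar k B) := fun h =>
    (sstar_sub_not hk hM) (Finset.mem_of_mem_erase h)
  rw [PhiT, Finset.sum_insert h1]
  have h2 : ∑ x ∈ B.erase (sstar k B), id x + id (sstar k B) = ∑ x ∈ B, id x :=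
    Finset.sum_erase_add B id (sstar_in_B hk hM)
  have h3 := k_le_sstar hk hM
  simp only [id_eq] at h2 ⊢
  omega

lemma mem_phiT {t : ℕ} : t ∈ PhiT k B ↔ t = sstar k B - k ∨ (t ∈ B ∧ t ≠ sstar k B) := by
  rw [PhiT, Finset.mem_insert, Finset.mem_erase]
  tauto

/-- Case A: the saturation property holds for sstar itself. -/
lemma sstar_good (hG : (GoodSet k B).Nonempty) :
    ∀ x < sstar k B - k, x % k = rstar k B → x ∈ B := by
  have hr : GoodP k B (rstar k B) := by
    rw [rstar, dif_pos hG]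
    have := (GoodSet k B).min'_mem hG
    unfold GoodSet at this
    rw [Finset.mem_filter] at this
    exact this.2
  obtain ⟨sw, hsw, hprop⟩ := hr
  have h1 : sstar k B ≤ sw := sstar_min hk hM sw hsw
  have h2 : ¬ sstar k B < sw := by
    intro hlt
    have hk1 := k_le_sstar hk hM
    have hx : sstar k B - k < sw - k := by
      rw [mem_movR k] at hsw
      omega
    have := hprop (sstar k B - k) hx (sstar_sub_mod hk hM)
    exact (sstar_sub_not hk hM) this
  have : sw = sstar k B := by omega
  subst this
  exact hprop

lemma caseA_rec (hG : (GoodSet k B).Nonempty) :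
    recA k (rstar k B) (PhiT k B) = sstar k B - k := by
  set r := rstar k B with hr
  set s := sstar k B with hs
  have hks : k ≤ s := k_le_sstar hk hM
  have hsB : s ∈ B := sstar_in_B hk hM
  have hmem : s - k ∈ (PhiT k B).filter (fun t => t % k = r ∧ ∀ x ≤ t, x % k = r → x ∈ PhiT k B) := by
    rw [Finset.mem_filter]
    refine ⟨(mem_phiT hk hM).mpr (Or.inl rfl), sstar_sub_mod hk hM, ?_⟩
    intro x hx hxr
    rcases Nat.lt_or_ge x (s - k) with h | h
    · have hxB : x ∈ B := sstar_good hk hM hG x h hxr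
      rw [mem_phiT hk hM]
      right
      exact ⟨hxB, by omega⟩
    · have : x = s - k := by omega
      rw [this, mem_phiT hk hM]
      exact Or.inl rfl
  have hmax : ∀ t ∈ (PhiT k B).filter (fun t => t % k = r ∧ ∀ x ≤ t, x % k = r → x ∈ PhiT k B),
      t ≤ s - k := by
    intro t ht
    rw [Finset.mem_filter] at ht
    obtain ⟨htP, htr, hcl⟩ := ht
    by_contra hgt
    push_neg at hgt
    have hts : s ≤ t := by
      have h1 : (s - k) % k = t % k := by rw [htr]; exact sstar_sub_mod hk hM
      have := mod_step (k := k) hgt h1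
      omega
    have hsP : s ∈ PhiT k B := hcl s hts (by rw [hs, hr]; exact sstar_mod hk hM)
    rw [mem_phiT hk hM] at hsP
    rcases hsP with h | h
    · omega
    · exact h.2 rfl
  rw [recA, dif_pos ⟨_, hmem⟩]
  exact le_antisymm (Finset.max'_le _ _ _ hmax) (Finset.le_max' _ _ hmem)

/-- Case B: chain argument gives sstar ≥ 2k and a gap two runners down. -/
lemma caseB_chain (hnG : ¬ (GoodSet k B).Nonempty) :
    2 * k ≤ sstar k B ∧ sstar k B - 2 * k ∉ B := by
  set r := rstar k B with hr
  set s := sstar k B with hs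
  have hnGP : ¬ GoodP k B r := by
    intro hgp
    apply hnG
    refine ⟨r, ?_⟩
    unfold GoodSet
    rw [Finset.mem_filter, Finset.mem_range]
    exact ⟨rstar_lt hk hM, by rw [hr]; exact hgp⟩
  rw [GoodP] at hnGP
  push_neg at hnGP
  obtain ⟨x, hx1, hx2, hx3⟩ := hnGP s (sstar_mem hk hM)
  -- x < s - k, x % k = r, x ∉ B
  have hks : k ≤ s := k_le_sstar hk hM
  have hsr : s % k = r := sstar_mod hk hM
  have hdvd : k ∣ s - x := by
    apply (Nat.modEq_iff_dvd' (by omega)).mp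
    show x % k = s % k
    omega
  obtain ⟨c, hc⟩ := hdvd
  have hc2 : 2 ≤ c := by
    have hlt : k < s - x := by omega
    rcases Nat.lt_or_ge c 2 with h | h
    · exfalso
      have h2 : k * c ≤ k * 1 := Nat.mul_le_mul_left k (by omega)
      have h3 : k * 1 = k := Nat.mul_one k
      omega
    · exact h
  -- chain: no element of B on the runner strictly between x and s
  have chain : ∀ m, ∀ y, y ∉ B → y % k = r → y + (m + 2) * k = s → s - 2 * k ∉ B := by
    intro m
    induction m with
    | zero =>
      intro y hy hyr hye
      have : s - 2 * k = y := by omega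
      rw [this]; exact hy
    | succ m ih =>
      intro y hy hyr hye
      have hyk : y + k ∉ B := by
        intro hmem
        have hykM : y + k ∈ MovR k B r := by
          rw [mem_movR]
          refine ⟨hmem, by omega, by simpa using hy, by rw [Nat.add_mod_right]; exact hyr⟩
        have hmin := sstar_min hk hM _ hykM
        have hprod : (m + 1 + 2) * k = (m + 2) * k + k := by ring
        have hpos : 0 < (m + 2) * k := Nat.mul_pos (by omega) hk
        omega
      apply ih (y + k) hyk (by rw [Nat.add_mod_right]; exact hyr)
      have hprod : (m + 1 + 2) * k = (m + 2) * k + k := by ring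
      omega
  constructor
  · have : 2 * k ≤ k * c := by
      calc 2 * k = k * 2 := by ring
        _ ≤ k * c := Nat.mul_le_mul_left k hc2
    omega
  · apply chain (c - 2) x hx3 hx2
    have h1 : c - 2 + 2 = c := by omega
    rw [h1, Nat.mul_comm]
    omega

lemma caseB_sub_mem (hnG : ¬ (GoodSet k B).Nonempty) :
    sstar k B - k ∈ MovR k (PhiT k B) (rstar k B) ∧
    ∀ t ∈ MovR k (PhiT k B) (rstar k B), sstar k B - k ≤ t := by
  obtain ⟨h2k, hgap⟩ := caseB_chain hk hM hnG
  have hks := k_le_sstar hk hM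
  constructor
  · rw [mem_movR]
    refine ⟨(mem_phiT hk hM).mpr (Or.inl rfl), by omega, ?_, sstar_sub_mod hk hM⟩
    rw [mem_phiT hk hM]
    push_neg
    constructor
    · omega
    · intro hmem
      exfalso
      have : sstar k B - k - k = sstar k B - 2 * k := by omega
      rw [this] at hmem
      exact hgap hmem
  · intro t ht
    by_contra hlt
    push_neg at hlt
    rw [mem_movR] at ht
    obtain ⟨htP, htk, htg, htr⟩ := ht
    have htB : t ∈ B := by
      rw [mem_phiT hk hM] at htP
      rcases htP with h | h
      · omega
      · exact h.1
    have htgB : t - k ∉ B := by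
      intro hmem
      apply htg
      rw [mem_phiT hk hM]
      right
      refine ⟨hmem, by omega⟩
    have : t ∈ MovR k B (rstar k B) := by
      rw [mem_movR]; exact ⟨htB, htk, htgB, htr⟩
    have := sstar_min hk hM t this
    omega

lemma movR_phiT_ne (r : ℕ) (hne : r ≠ rstar k B) :
    MovR k (PhiT k B) r = MovR k B r := by
  have hks := k_le_sstar hk hM
  have hsmod := sstar_mod hk hM
  have hsubmod := sstar_sub_mod hk hM
  ext t
  rw [mem_movR, mem_movR]
  constructor
  · rintro ⟨h1, h2, h3, h4⟩
    have ht1 : t ≠ sstar k B - k := fun he => hne (by rw [← h4, he, hsubmod])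
    have ht2 : t ∈ B ∧ t ≠ sstar k B := by
      rw [mem_phiT hk hM] at h1
      rcases h1 with h | h
      · exact absurd h ht1
      · exact h
    refine ⟨ht2.1, h2, ?_, h4⟩
    intro hmem
    apply h3
    rw [mem_phiT hk hM]
    right
    refine ⟨hmem, ?_⟩
    intro he
    apply hne
    have hm : (t - k) % k = t % k := sub_mod_eq h2
    rw [← h4, ← hm, he, hsmod]
  · rintro ⟨h1, h2, h3, h4⟩
    have ht2 : t ≠ sstar k B := fun he => hne (by rw [← h4, he, hsmod])
    refine ⟨(mem_phiT hk hM).mpr (Or.inr ⟨h1, ht2⟩), h2, ?_, h4⟩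
    rw [mem_phiT hk hM]
    push_neg
    constructor
    · intro he
      apply hne
      have hm : (t - k) % k = t % k := sub_mod_eq h2
      rw [← h4, ← hm, he, hsubmod]
    · intro hmem
      exact absurd hmem h3

lemma caseB_RSet (hnG : ¬ (GoodSet k B).Nonempty) :
    RSet k (PhiT k B) = RSet k B := by
  ext r
  unfold RSet
  rw [Finset.mem_filter, Finset.mem_filter]
  by_cases hr : r = rstar k B
  · subst hr
    constructor
    · rintro ⟨h1, _⟩
      exact ⟨h1, ⟨sstar k B, sstar_mem hk hM⟩⟩
    · rintro ⟨h1, _⟩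
      exact ⟨h1, ⟨sstar k B - k, (caseB_sub_mem hk hM hnG).1⟩⟩
  · rw [movR_phiT_ne hk hM r hr]

lemma rstar_caseB (hnG : ¬ (GoodSet k B).Nonempty) :
    rstar k B = (RSet k B).min' (RSet_nonempty hk hM) := by
  rw [rstar, dif_neg hnG, dif_pos (RSet_nonempty hk hM)]

lemma lab_le : lab k B ≤ k := by
  rw [lab]
  split_ifs with h
  · exact le_of_lt (rstar_lt hk hM)
  · exact le_rfl

end specs

lemma min'_congr {S S' : Finset ℕ} (h : S = S') (hne : S.Nonempty) (hne' : S'.Nonempty) :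
    S.min' hne = S'.min' hne' := by
  subst h; rfl

theorem phi_inj {k : ℕ} (hk : 0 < k) {B B' : Finset ℕ}
    (hM : (Mov k B).Nonempty) (hM' : (Mov k B').Nonempty)
    (hL : lab k B = lab k B') (hT : PhiT k B = PhiT k B') : B = B' := by
  by_cases hG : (GoodSet k B).Nonempty <;> by_cases hG' : (GoodSet k B').Nonempty
  · -- both case A
    have hr : rstar k B = rstar k B' := by
      rw [lab, if_pos hG, lab, if_pos hG'] at hL
      exact hL
    have h1 : sstar k B - k = sstar k B' - k := by
      rw [← caseA_rec hk hM hG, ← caseA_rec hk hM' hG', hr, hT]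
    have h2 : sstar k B = sstar k B' := by
      have := k_le_sstar hk hM
      have := k_le_sstar hk hM'
      omega
    rw [phiT_recover hk hM, phiT_recover hk hM', hT, h2]
  · exfalso
    rw [lab, if_pos hG, lab, if_neg hG'] at hL
    have := rstar_lt hk hM
    omega
  · exfalso
    rw [lab, if_neg hG, lab, if_pos hG'] at hL
    have := rstar_lt hk hM'
    omega
  · -- both case B
    have hR : RSet k B = RSet k B' := by
      rw [← caseB_RSet hk hM hG, ← caseB_RSet hk hM' hG', hT]
    have hr : rstar k B = rstar k B' := by
      rw [rstar_caseB hk hM hG, rstar_caseB hk hM' hG']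
      exact min'_congr hR _ _
    have hsetEq : MovR k (PhiT k B) (rstar k B) = MovR k (PhiT k B') (rstar k B') := by
      rw [hT, hr]
    obtain ⟨hmem1, hmin1⟩ := caseB_sub_mem hk hM hG
    obtain ⟨hmem2, hmin2⟩ := caseB_sub_mem hk hM' hG'
    have h1 : sstar k B - k = sstar k B' - k := by
      apply le_antisymm
      · exact hmin1 _ (by rw [hsetEq]; exact hmem2)
      · exact hmin2 _ (by rw [← hsetEq]; exact hmem1)
    have h2 : sstar k B = sstar k B' := by
      have := k_le_sstar hk hM
      have := k_le_sstar hk hM'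
      omega
    rw [phiT_recover hk hM, phiT_recover hk hM', hT, h2]

end Core


lemma card_le_sum (μ : Multiset ℕ) (hpos : ∀ x ∈ μ, 0 < x) : μ.card ≤ μ.sum := by
  induction μ using Multiset.induction with
  | empty => simp
  | cons a t ih =>
    rw [Multiset.card_cons, Multiset.sum_cons]
    have h1 : 0 < a := hpos a (Multiset.mem_cons_self a t)
    have h2 := ih (fun x hx => hpos x (Multiset.mem_cons_of_mem hx))
    omega

lemma gap_not_mem (μ : Multiset ℕ) (N j : ℕ) (hcard : μ.card ≤ N) :
    N + j - (μ.filter (fun x => j < x)).card ∉ beta μ N := by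
  intro hmem
  rw [mem_beta] at hmem
  obtain ⟨t, ht, he⟩ := hmem
  have hcle : (μ.filter (fun x => j < x)).card ≤ μ.card := Multiset.card_le_card (μ.filter_le _)
  rcases Nat.lt_or_ge t ((μ.filter (fun x => j < x)).card) with h | h
  · have h1 : j < partNth μ t := (partNth_lt_iff μ j t).mpr h
    omega
  · have h1 : ¬ (j < partNth μ t) := fun hj => by
      have := (partNth_lt_iff μ j t).mp hj
      omega
    push_neg at h1
    omega

lemma climb (k : ℕ) (hk : 0 < k) (B : Finset ℕ) :
    ∀ m g, g ∉ B → g + (m + 1) * k ∈ B → (Mov k B).Nonempty := by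
  intro m
  induction m with
  | zero =>
    intro g hg hgB
    refine ⟨g + 1 * k, ?_⟩
    rw [Mov, Finset.mem_filter]
    refine ⟨hgB, by omega, ?_⟩
    have : g + 1 * k - k = g := by omega
    rw [this]
    exact hg
  | succ m ih =>
    intro g hg hgB
    by_cases hgk : g + k ∈ B
    · refine ⟨g + k, ?_⟩
      rw [Mov, Finset.mem_filter]
      refine ⟨hgk, by omega, ?_⟩
      have : g + k - k = g := by omega
      rw [this]
      exact hg
    · apply ih (g + k) hgk
      have : g + k + (m + 1) * k = g + (m + 1 + 1) * k := by ring
      rw [this]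
      exact hgB

lemma noncore_mov {k n : ℕ} (hk : 0 < k) (α : Nat.Partition n)
    (h : ¬ IsCore k α) : (Mov k (beta α.parts n)).Nonempty := by
  rw [IsCore] at h
  push_neg at h
  obtain ⟨i, j, hij, hdvd⟩ := h
  set μ := α.parts with hμ
  have hcard : μ.card ≤ n := by
    have h1 := card_le_sum μ (fun x hx => α.parts_pos hx)
    rw [α.parts_sum] at h1
    exact h1
  set c := (μ.filter (fun x => j < x)).card with hc
  have hic : i < c := (partNth_lt_iff μ j i).mp hij
  have hcle : c ≤ μ.card := Multiset.card_le_card (μ.filter_le _)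
  have hin : i < n := by omega
  -- the bead and the gap
  have hbead : partNth μ i + (n - 1 - i) ∈ beta μ n := mem_beta.mpr ⟨i, hin, rfl⟩
  have hgap : n + j - c ∉ beta μ n := gap_not_mem μ n j hcard
  -- hook length
  have hhook : hookLen μ i j = (partNth μ i - j) + (c - i) - 1 := rfl
  have hpos : 1 ≤ hookLen μ i j := by
    rw [hhook]; omega
  obtain ⟨m, hm⟩ := hdvd
  have hm1 : 1 ≤ m := by
    by_contra hm0
    push_neg at hm0
    interval_cases m
    · rw [Nat.mul_zero] at hm; omega
  have hsum : (n + j - c) + hookLen μ i j = partNth μ i + (n - 1 - i) := by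
    rw [hhook]; omega
  apply climb k hk (beta μ n) (m - 1) (n + j - c) hgap
  have h1 : (m - 1 + 1) = m := by omega
  rw [h1]
  have h2 : (n + j - c) + m * k = partNth μ i + (n - 1 - i) := by
    rw [Nat.mul_comm, ← hm]; omega
  rw [← h2] at hbead
  exact hbead

noncomputable def toPartition (T : Finset ℕ) (N m : ℕ) (hc : T.card = N)
    (hs : T.sum id = m + ∑ i ∈ range N, i) : Nat.Partition m where
  parts := pmul T N
  parts_pos := fun {i} h => pmul_pos T N h
  parts_sum := pmul_sum T N hc hs

lemma parts_card_le {n : ℕ} (α : Nat.Partition n) : α.parts.card ≤ n := by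
  have h := card_le_sum α.parts (fun x hx => α.parts_pos hx)
  rw [α.parts_sum] at h
  exact h

noncomputable def finalMap (k n : ℕ) (hk : 0 < k) (hkn : k ≤ n)
    (x : {α : Nat.Partition n // ¬ IsCore k α}) : Fin (k + 1) × Nat.Partition (n - k) :=
  have hM : (Mov k (beta x.1.parts n)).Nonempty := noncore_mov hk x.1 x.2
  (⟨lab k (beta x.1.parts n), Nat.lt_succ_of_le (lab_le hk hM)⟩,
   toPartition (PhiT k (beta x.1.parts n)) n (n - k)
     (by rw [phiT_card hk hM, card_beta])
     (by
        have h1 := phiT_sum hk hM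
        have h2 := sum_beta x.1.parts n (parts_card_le x.1)
        rw [x.1.parts_sum] at h2
        omega))

lemma finalMap_inj (k n : ℕ) (hk : 0 < k) (hkn : k ≤ n) :
    Function.Injective (finalMap k n hk hkn) := by
  rintro ⟨α, hα⟩ ⟨α', hα'⟩ he
  have hM := noncore_mov hk α hα
  have hM' := noncore_mov hk α' hα'
  have hL2 : lab k (beta α.parts n) = lab k (beta α'.parts n) :=
    congrArg (fun p => (p.1 : ℕ)) he
  have hparts : pmul (PhiT k (beta α.parts n)) n = pmul (PhiT k (beta α'.parts n)) n :=
    congrArg (fun p => p.2.parts) he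
  have hTcard : (PhiT k (beta α.parts n)).card = n := by rw [phiT_card hk hM, card_beta]
  have hTcard' : (PhiT k (beta α'.parts n)).card = n := by rw [phiT_card hk hM', card_beta]
  have hT : PhiT k (beta α.parts n) = PhiT k (beta α'.parts n) := by
    rw [← beta_pmul _ n hTcard, ← beta_pmul _ n hTcard', hparts]
  have hB := phi_inj hk hM hM' hL2 hT
  have hpp := beta_inj (fun x hx => α.parts_pos hx) (fun x hx => α'.parts_pos hx)
      (parts_card_le α) (parts_card_le α') hB
  exact Subtype.ext (Nat.Partition.ext hpp)

end NCB

theorem non_core_bound (k n : ℕ) (hk : 1 ≤ k) (hkn : k ≤ n) :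
    pfun n - ck k n ≤ (k + 1) * pfun (n - k) := by
  classical
  have hk0 : 0 < k := hk
  have h1 : Nat.card {α : Nat.Partition n // ¬ IsCore k α}
      ≤ Nat.card (Fin (k + 1) × Nat.Partition (n - k)) :=
    Nat.card_le_card_of_injective _ (NCB.finalMap_inj k n hk0 hkn)
  rw [Nat.card_prod] at h1
  have h2 : Nat.card (Fin (k + 1)) = k + 1 := by
    rw [Nat.card_eq_fintype_card, Fintype.card_fin]
  rw [h2] at h1
  have h1' : Nat.card {α : Nat.Partition n // ¬ IsCore k α} ≤ (k + 1) * pfun (n - k) := h1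
  have h3 : pfun n ≤ ck k n + Nat.card {α : Nat.Partition n // ¬ IsCore k α} := by
    unfold pfun ck
    rw [Nat.card_eq_fintype_card, Nat.card_eq_fintype_card, Nat.card_eq_fintype_card]
    have h4 := Fintype.card_subtype_compl (fun α : Nat.Partition n => IsCore k α)
    have h5 := Fintype.card_subtype_le (fun α : Nat.Partition n => IsCore k α)
    omega
  omega
end

section
/- Let p be a prime, n ≥ 1, and let λ = (a₁^{b₁}, ..., a_h^{b_h}) be a partition of n into parts not divisible by p, written with multiplicities b_j for the distinct parts a_j. For each j write the p-adic expansion b_j = Σ_t f_{j,t} p^t with 0 ≤ f_{j,t} < p, and define the partition λ̄ obtained by replacing, for each j and t, the f_{j,t}·p^t copies of a_j by f_{j,t} parts each equal to a_j·p^t. Then λ̄ is a partition of n and (λ̄)* = λ, where μ* is obtained from μ by replacing each part p^k·a (p ∤ a) by p^k copies of a. -/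
/-- `μ*`: replace each part `p^k·a` (with `p ∤ a`) of `μ` by `p^k` copies of `a`. -/
def star (p : ℕ) (μ : Multiset ℕ) : Multiset ℕ :=
  μ.bind (fun x => Multiset.replicate (p ^ x.factorization p) (x / p ^ x.factorization p))

/-- The partition `λ̄` obtained from `λ = (a₁^{b₁}, …, a_h^{b_h})`: for each distinct part `a`
with multiplicity `b = Σ_t f_t p^t` (`p`-adic digits `f_t`), take `f_t` parts equal to `a·p^t`. -/
def lamBar (p : ℕ) (μ : Multiset ℕ) : Multiset ℕ :=
  μ.toFinset.val.bind (fun a =>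
    (Finset.range (μ.count a + 1)).val.bind (fun t =>
      Multiset.replicate (μ.count a / p ^ t % p) (a * p ^ t)))

lemma mod_pow_succ' (p m b : ℕ) :
    b % p ^ (m + 1) = p ^ m * (b / p ^ m % p) + b % p ^ m := by
  conv_lhs => rw [← Nat.div_add_mod (b % p ^ (m+1)) (p ^ m)]
  rw [pow_succ, Nat.mod_mul_right_div_self, Nat.mod_mod_of_dvd _ (dvd_mul_right _ _)]

lemma digit_partial (p b m : ℕ) :
    ∑ t ∈ Finset.range m, b / p ^ t % p * p ^ t = b % p ^ m := by
  induction m with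
  | zero => simp [Nat.mod_one]
  | succ m ih =>
    rw [Finset.sum_range_succ, ih, mod_pow_succ' p m b]
    ring

lemma digit_sum (p b : ℕ) (hp : 2 ≤ p) :
    ∑ t ∈ Finset.range (b + 1), b / p ^ t % p * p ^ t = b := by
  rw [digit_partial, Nat.mod_eq_of_lt]
  calc b < 2 ^ (b + 1) := (Nat.lt_two_pow_self (n := b)).trans (Nat.pow_lt_pow_succ one_lt_two)
  _ ≤ p ^ (b + 1) := Nat.pow_le_pow_left hp _

lemma finset_bind (s : Finset ℕ) (f : ℕ → Multiset ℕ) :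
    s.val.bind f = ∑ x ∈ s, f x := by
  rfl

lemma star_def (p : ℕ) (μ : Multiset ℕ) : star p μ =
    μ.bind (fun x => Multiset.replicate (p ^ x.factorization p) (x / p ^ x.factorization p)) :=
  rfl

lemma mystar_sum (p : ℕ) (μ : Multiset ℕ) : (star p μ).sum = μ.sum := by
  rw [star_def, Multiset.sum_bind]
  congr 1
  conv_rhs => rw [← Multiset.map_id μ]
  apply Multiset.map_congr rfl
  intro x _
  simp only [id]
  rw [Multiset.sum_replicate, smul_eq_mul, Nat.mul_div_cancel' (Nat.ordProj_dvd x p)]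

theorem lamBar_is_partition_and_star (p n : ℕ) (hp : p.Prime) (hn : 1 ≤ n)
    (lam : Nat.Partition n) (hlam : ∀ x ∈ lam.parts, ¬ p ∣ x) :
    (lamBar p lam.parts).sum = n ∧ (∀ x ∈ lamBar p lam.parts, 0 < x) ∧
      star p (lamBar p lam.parts) = lam.parts := by
  set μ := lam.parts with hμ
  have hstar : star p (lamBar p μ) = μ := by
    rw [lamBar, star_def, Multiset.bind_assoc, finset_bind]
    have key : ∀ a ∈ μ.toFinset,
        (((Finset.range (μ.count a + 1)).val.bind fun t =>
          Multiset.replicate (μ.count a / p ^ t % p) (a * p ^ t)).bind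
            (fun x => Multiset.replicate (p ^ x.factorization p) (x / p ^ x.factorization p)))
          = μ.count a • ({a} : Multiset ℕ) := by
      intro a ha
      replace ha : a ∈ μ := by simpa using ha
      have ha0 : a ≠ 0 := (lam.parts_pos ha).ne'
      have hpa : ¬ p ∣ a := hlam a ha
      rw [Multiset.bind_assoc, finset_bind]
      have hterm : ∀ t, (Multiset.replicate (μ.count a / p ^ t % p) (a * p ^ t)).bind
            (fun x => Multiset.replicate (p ^ x.factorization p) (x / p ^ x.factorization p))
          = (μ.count a / p ^ t % p * p ^ t) • ({a} : Multiset ℕ) := by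
        intro t
        have hfac : (a * p ^ t).factorization p = t := by
          rw [Nat.factorization_mul ha0 (pow_ne_zero t hp.pos.ne'),
            Nat.Prime.factorization_pow hp]
          simp [Nat.factorization_eq_zero_of_not_dvd hpa]
        have hdiv : a * p ^ t / p ^ t = a := by
          rw [Nat.mul_div_assoc a (dvd_refl _), Nat.div_self (pow_pos hp.pos t), mul_one]
        rw [Multiset.bind, Multiset.map_replicate, hfac, hdiv, Multiset.join,
          Multiset.sum_replicate, ← Multiset.nsmul_singleton, smul_smul]
      calc ∑ t ∈ Finset.range (μ.count a + 1),
            (Multiset.replicate (μ.count a / p ^ t % p) (a * p ^ t)).bind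
              (fun x => Multiset.replicate (p ^ x.factorization p) (x / p ^ x.factorization p))
          = ∑ t ∈ Finset.range (μ.count a + 1),
              (μ.count a / p ^ t % p * p ^ t) • ({a} : Multiset ℕ) := by
            exact Finset.sum_congr rfl fun t _ => hterm t
        _ = (∑ t ∈ Finset.range (μ.count a + 1),
              μ.count a / p ^ t % p * p ^ t) • ({a} : Multiset ℕ) := by
            rw [Finset.sum_smul]
        _ = μ.count a • ({a} : Multiset ℕ) := by rw [digit_sum p _ hp.two_le]
    exact (Finset.sum_congr rfl key).trans (Multiset.toFinset_sum_count_nsmul_eq μ)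
  refine ⟨?_, ?_, hstar⟩
  · have := mystar_sum p (lamBar p μ)
    rw [hstar] at this
    rw [← this, lam.parts_sum]
  · intro x hx
    rw [lamBar, Multiset.mem_bind] at hx
    obtain ⟨a, ha, hx⟩ := hx
    rw [Multiset.mem_bind] at hx
    obtain ⟨t, _, hx⟩ := hx
    rw [Multiset.eq_of_mem_replicate hx]
    replace ha : a ∈ μ := by simpa using ha
    exact Nat.mul_pos (lam.parts_pos ha) (pow_pos hp.pos t)
end

section
/- Let p be a prime, c > 0, and λ = (a₁^{b₁}, ..., a_h^{b_h}) a partition of n into parts not divisible by p with h distinct parts. If h ≤ √n/(c·p·log n), then there exist indices i and s ≥ 0 with p^s ≤ b_i and a_i·p^s ≥ c·√n·log(n). -/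
theorem pigeonhole_large_part (p n : ℕ) (hp : p.Prime) (hn : 1 ≤ n) (c : ℝ) (hc : 0 < c)
    (lam : Nat.Partition n) (hlam : ∀ x ∈ lam.parts, ¬ p ∣ x)
    (hh : (lam.parts.toFinset.card : ℝ) ≤ Real.sqrt n / (c * p * Real.log n)) :
    ∃ a ∈ lam.parts, ∃ s : ℕ,
      p ^ s ≤ lam.parts.count a ∧ c * Real.sqrt n * Real.log n ≤ (a * p ^ s : ℕ) := by
  have hsumn : lam.parts.sum = n := lam.parts_sum
  have hne : lam.parts ≠ 0 := by
    intro h0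
    rw [h0] at hsumn
    simp at hsumn
    omega
  obtain ⟨a0, ha0⟩ := Multiset.exists_mem_of_ne_zero hne
  by_cases hn1 : n = 1
  · refine ⟨a0, ha0, 0, by simpa [Multiset.one_le_count_iff_mem] using ha0, ?_⟩
    simp [hn1]
  have hn2 : 2 ≤ n := by omega
  have hlog : 0 < Real.log n := Real.log_pos (by exact_mod_cast by omega)
  have hp0 : (0:ℝ) < p := by exact_mod_cast hp.pos
  have hsq : 0 < Real.sqrt n := Real.sqrt_pos.2 (by positivity)
  set T := lam.parts.toFinset with hT
  have hTne : T.Nonempty := ⟨a0, Multiset.mem_toFinset.2 ha0⟩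
  have hsum : ∑ a ∈ T, ((lam.parts.count a : ℝ) * a) = n := by
    have hnat : ∑ a ∈ T, lam.parts.count a * a = n := by
      have h := Finset.sum_multiset_map_count lam.parts (id : ℕ → ℕ)
      simpa [hsumn, Multiset.map_id, smul_eq_mul] using h.symm
    exact_mod_cast hnat
  have hden : 0 < c * p * Real.log n := by positivity
  have key : ∃ a ∈ T, c * p * Real.sqrt n * Real.log n ≤ (lam.parts.count a : ℝ) * a := by
    apply Finset.exists_le_of_sum_le hTne
    rw [hsum, Finset.sum_const, nsmul_eq_mul]
    have h1 : (T.card : ℝ) * (c * p * Real.sqrt n * Real.log n)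
        ≤ (Real.sqrt n / (c * p * Real.log n)) * (c * p * Real.sqrt n * Real.log n) := by
      apply mul_le_mul_of_nonneg_right hh (by positivity)
    calc (T.card : ℝ) * (c * p * Real.sqrt n * Real.log n)
        ≤ (Real.sqrt n / (c * p * Real.log n)) * (c * p * Real.sqrt n * Real.log n) := h1
      _ = Real.sqrt n * Real.sqrt n := by
          have hms := Real.mul_self_sqrt (show (0:ℝ) ≤ (n:ℝ) by positivity)
          field_simp
      _ = n := Real.mul_self_sqrt (by positivity)
  obtain ⟨a, haT, hA⟩ := key
  have ham : a ∈ lam.parts := Multiset.mem_toFinset.1 haT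
  have hcount : 1 ≤ lam.parts.count a := Multiset.one_le_count_iff_mem.2 ham
  set b := lam.parts.count a with hb
  set s := Nat.log p b with hs
  have hps : p ^ s ≤ b := Nat.pow_log_le_self p (by omega)
  have hlt : b < p ^ (s + 1) := Nat.lt_pow_succ_log_self hp.one_lt b
  refine ⟨a, ham, s, hps, ?_⟩
  have hlt' : (b : ℝ) ≤ (p : ℝ) * (p : ℝ) ^ s := by
    have : (b : ℝ) < ((p ^ (s + 1) : ℕ) : ℝ) := by exact_mod_cast hlt
    rw [pow_succ, mul_comm] at this
    push_cast at this
    linarith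
  have ha0' : (0:ℝ) ≤ (a : ℝ) := by positivity
  have h2 : c * p * Real.sqrt n * Real.log n ≤ (a : ℝ) * ((p : ℝ) * (p : ℝ) ^ s) := by
    calc c * p * Real.sqrt n * Real.log n ≤ (b : ℝ) * a := hA
      _ ≤ ((p : ℝ) * (p : ℝ) ^ s) * a := mul_le_mul_of_nonneg_right hlt' ha0'
      _ = (a : ℝ) * ((p : ℝ) * (p : ℝ) ^ s) := by ring
  have : c * Real.sqrt n * Real.log n ≤ (a : ℝ) * (p : ℝ) ^ s := by
    rw [← mul_le_mul_iff_right₀ hp0]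
    nlinarith [h2]
  push_cast
  linarith
end

section
/- For every partition λ of n − 1, let h be the largest index with |λ^h| > 0 in a k-multipartition λ = (λ¹,...,λᵏ) (h = 0 if all components are empty). Define A(λ) to be the set of k-multipartitions of n obtained from λ by adding a node to λ^h at the end of its last row or at the bottom of its first column, or by adding a single node to some λ^i with i > h. Then |A(λ)| ≤ k+1, and every k-multipartition of n lies in A(λ) for some k-multipartition λ of n−1. -/
/-- `f : Fin k → Multiset ℕ` is a `k`-multipartition of `m`: all parts are positive and the
total size is `m`. -/
def IsMP (k : ℕ) (f : Fin k → Multiset ℕ) (m : ℕ) : Prop :=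
  (∀ i, ∀ x ∈ f i, 0 < x) ∧ (∑ i, (f i).sum) = m

/-- `μ` is obtained from the partition `ν` by adding one node, either at the end of the last
row (increasing a smallest part by one) or at the bottom of the first column (adding a part
equal to `1`). -/
def AddEndNode (ν μ : Multiset ℕ) : Prop :=
  μ = 1 ::ₘ ν ∨ (∃ a ∈ ν, (∀ b ∈ ν, a ≤ b) ∧ μ = (a + 1) ::ₘ ν.erase a)

/-- The set `A(f)` of multipartitions obtained from `f` by adding a node to the last nonempty
component `f h` at the end of its last row or at the bottom of its first column, or by adding a
single node (necessarily forming the partition `(1)`) to a component after the last nonempty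
one. -/
def ASet (k : ℕ) (f : Fin k → Multiset ℕ) : Set (Fin k → Multiset ℕ) :=
  { g |
    (∃ hi : Fin k, f hi ≠ 0 ∧ (∀ j, hi < j → f j = 0) ∧
      (((∀ j, j ≠ hi → g j = f j) ∧ AddEndNode (f hi) (g hi)) ∨
        (∃ i, hi < i ∧ (∀ j, j ≠ i → g j = f j) ∧ g i = {1}))) ∨
    ((∀ j, f j = 0) ∧ ∃ i, (∀ j, j ≠ i → g j = f j) ∧ g i = {1}) }

lemma exists_last {k : ℕ} (f : Fin k → Multiset ℕ) (h : ¬ ∀ j, f j = 0) :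
    ∃ hi, f hi ≠ 0 ∧ ∀ j, hi < j → f j = 0 := by
  push_neg at h
  obtain ⟨i, hi⟩ := h
  set s := Finset.univ.filter (fun i => f i ≠ 0) with hs
  have hne : s.Nonempty := ⟨i, by simp [hs, hi]⟩
  refine ⟨s.max' hne, ?_, ?_⟩
  · have := s.max'_mem hne
    simp [hs] at this
    exact this
  · intro j hj
    by_contra hj0
    exact absurd (s.le_max' j (by simp [hs, hj0])) (not_le_of_gt hj)

lemma last_unique {k : ℕ} {f : Fin k → Multiset ℕ} {a b : Fin k}
    (ha : f a ≠ 0) (ha2 : ∀ j, a < j → f j = 0)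
    (hb : f b ≠ 0) (hb2 : ∀ j, b < j → f j = 0) : a = b := by
  rcases lt_trichotomy a b with h | h | h
  · exact absurd (ha2 b h) hb
  · exact h
  · exact absurd (hb2 a h) ha

lemma sum_update_eq {k : ℕ} (g : Fin k → Multiset ℕ) (hi : Fin k) (v : Multiset ℕ) :
    ∑ i, (Function.update g hi v i).sum
      = v.sum + ∑ i ∈ Finset.univ.erase hi, (g i).sum := by
  have : (fun i => (Function.update g hi v i).sum)
      = Function.update (fun i => (g i).sum) hi v.sum := by
    funext i
    rcases eq_or_ne i hi with rfl | h
    · simp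
    · simp [Function.update_of_ne h]
  rw [this, Finset.sum_update_of_mem (Finset.mem_univ hi), Finset.sdiff_singleton_eq_erase]

lemma sum_split {k : ℕ} (g : Fin k → Multiset ℕ) (hi : Fin k) :
    ∑ i, (g i).sum = (g hi).sum + ∑ i ∈ Finset.univ.erase hi, (g i).sum :=
  (Finset.add_sum_erase _ _ (Finset.mem_univ hi)).symm

theorem multipartition_covering (k n : ℕ) (hk : 1 ≤ k) (hn : 1 ≤ n) :
    (∀ f : Fin k → Multiset ℕ, IsMP k f (n - 1) → (ASet k f).ncard ≤ k + 1) ∧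
    (∀ g : Fin k → Multiset ℕ, IsMP k g n →
      ∃ f : Fin k → Multiset ℕ, IsMP k f (n - 1) ∧ g ∈ ASet k f) := by
  constructor
  · -- counting part
    intro f _
    by_cases h0 : ∀ j, f j = 0
    · have hsub : ASet k f ⊆ (fun i => Function.update f i {1}) '' Set.univ := by
        rintro g (⟨hi, hne, -⟩ | ⟨-, i, hgj, hgi⟩)
        · exact absurd (h0 hi) hne
        · refine ⟨i, trivial, funext fun j => ?_⟩
          rcases eq_or_ne j i with rfl | h
          · simp [hgi]
          · simp [Function.update_of_ne h, (hgj j h).symm]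
      calc (ASet k f).ncard ≤ ((fun i => Function.update f i {1}) '' Set.univ).ncard :=
            Set.ncard_le_ncard hsub (Set.toFinite _)
        _ ≤ (Set.univ : Set (Fin k)).ncard := Set.ncard_image_le (Set.toFinite _)
        _ = k := by simp [Set.ncard_univ]
        _ ≤ k + 1 := Nat.le_succ k
    · obtain ⟨hi, h1, h2⟩ := exists_last f h0
      set a₀ := sInf {a | a ∈ f hi} with ha₀
      set g1 := Function.update f hi (1 ::ₘ f hi) with hg1
      set F : Fin k → (Fin k → Multiset ℕ) := fun i =>
        if i = hi then Function.update f hi ((a₀ + 1) ::ₘ (f hi).erase a₀)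
        else Function.update f i {1} with hF
      have hsub : ASet k f ⊆ insert g1 (F '' Set.univ) := by
        rintro g (⟨hi', hne', hlast', hcase⟩ | ⟨hall, -⟩)
        · have heq : hi = hi' := last_unique h1 h2 hne' hlast'
          subst heq
          rcases hcase with ⟨hgj, hadd⟩ | ⟨i, hlt, hgj, hgi⟩
          · rcases hadd with hμ | ⟨a, haν, hmin, hμ⟩
            · left
              funext j
              rcases eq_or_ne j hi with rfl | h
              · simp [hg1, hμ]
              · simp [hg1, Function.update_of_ne h, hgj j h]
            · right
              refine ⟨hi, trivial, funext fun j => ?_⟩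
              have hmem : a₀ ∈ f hi := by
                have : {a | a ∈ f hi}.Nonempty := by
                  obtain ⟨x, hx⟩ := Multiset.exists_mem_of_ne_zero hne'
                  exact ⟨x, hx⟩
                exact Nat.sInf_mem this
              have haa : a = a₀ :=
                le_antisymm (hmin a₀ hmem) (Nat.sInf_le haν)
              rcases eq_or_ne j hi with rfl | h
              · simp [hF, hμ, haa]
              · simp [hF, Function.update_of_ne h, (hgj j h).symm]
          · right
            refine ⟨i, trivial, funext fun j => ?_⟩
            have hne : i ≠ hi := (ne_of_gt hlt)
            rcases eq_or_ne j i with rfl | h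
            · simp [hF, hne, hgi]
            · simp [hF, hne, Function.update_of_ne h, (hgj j h).symm]
        · exact absurd (hall hi) h1
      calc (ASet k f).ncard ≤ (insert g1 (F '' Set.univ)).ncard :=
            Set.ncard_le_ncard hsub (Set.toFinite _)
        _ ≤ (F '' Set.univ).ncard + 1 := Set.ncard_insert_le _ _
        _ ≤ (Set.univ : Set (Fin k)).ncard + 1 :=
            Nat.add_le_add_right (Set.ncard_image_le (Set.toFinite _)) 1
        _ = k + 1 := by simp [Set.ncard_univ]
  · -- covering part
    intro g hg
    have hne : ¬ ∀ j, g j = 0 := by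
      intro h
      have h0 : (∑ i, (g i).sum) = 0 := by simp [h]
      have := hg.2
      omega
    obtain ⟨hi, h1, h2⟩ := exists_last g hne
    have hbase := sum_split g hi
    by_cases hone : g hi = {1}
    · -- remove the unique node of g hi
      refine ⟨Function.update g hi 0, ⟨?_, ?_⟩, ?_⟩
      · intro i x hx
        rcases eq_or_ne i hi with h | h
        · rw [h, Function.update_self] at hx
          simp at hx
        · exact hg.1 i x (by rwa [Function.update_of_ne h] at hx)
      · rw [sum_update_eq]
        have hsum : (g hi).sum = 1 := by rw [hone]; simp
        have := hg.2
        simp only [Multiset.sum_zero, zero_add]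
        omega
      · by_cases hall : ∀ j, Function.update g hi 0 j = 0
        · right
          refine ⟨hall, hi, fun j hj => (Function.update_of_ne hj 0 g).symm, hone⟩
        · left
          obtain ⟨hi', h1', h2'⟩ := exists_last _ hall
          have hlt : hi' < hi := by
            have hne' : hi' ≠ hi := by
              intro h; apply h1'; rw [h]; simp
            rcases lt_or_gt_of_ne hne' with h | h
            · exact h
            · exfalso
              apply h1'
              rw [Function.update_of_ne hne', h2 hi' h]
          exact ⟨hi', h1', h2', Or.inr ⟨hi, hlt,
            fun j hj => (Function.update_of_ne hj 0 g).symm, hone⟩⟩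
    · -- g hi has other content; remove a node from its smallest part
      have hnem : {a | a ∈ g hi}.Nonempty := by
        obtain ⟨x, hx⟩ := Multiset.exists_mem_of_ne_zero h1
        exact ⟨x, hx⟩
      set b := sInf {a | a ∈ g hi} with hb
      have hbmem : b ∈ g hi := Nat.sInf_mem hnem
      have hbpos : 0 < b := hg.1 hi b hbmem
      have hbmin : ∀ c ∈ g hi, b ≤ c := fun c hc => Nat.sInf_le hc
      have hcons : b ::ₘ (g hi).erase b = g hi := Multiset.cons_erase hbmem
      have hesum : b + ((g hi).erase b).sum = (g hi).sum := by
        rw [← Multiset.sum_cons, hcons]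
      by_cases hb1 : b = 1
      · -- remove a part equal to 1
        set ν := (g hi).erase b with hν
        have hν0 : ν ≠ 0 := by
          intro h
          apply hone
          rw [← hcons, h, hb1]; rfl
        refine ⟨Function.update g hi ν, ⟨?_, ?_⟩, ?_⟩
        · intro i x hx
          rcases eq_or_ne i hi with h | h
          · subst h
            rw [Function.update_self] at hx
            exact hg.1 i x (Multiset.mem_of_mem_erase hx)
          · exact hg.1 i x (by rwa [Function.update_of_ne h] at hx)
        · rw [sum_update_eq]
          have := hg.2
          omega
        · left
          refine ⟨hi, by simpa using hν0, ?_, Or.inl ⟨?_, ?_⟩⟩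
          · intro j hj
            rw [Function.update_of_ne (ne_of_gt hj), h2 j hj]
          · intro j hj
            rw [Function.update_of_ne hj]
          · left
            rw [Function.update_self, hν, ← hb1, hcons]
      · -- shrink the smallest part by one
        set ν := (b - 1) ::ₘ (g hi).erase b with hν
        have hν0 : ν ≠ 0 := by simp [hν]
        refine ⟨Function.update g hi ν, ⟨?_, ?_⟩, ?_⟩
        · intro i x hx
          rcases eq_or_ne i hi with h | h
          · subst h
            rw [Function.update_self, hν, Multiset.mem_cons] at hx
            rcases hx with rfl | hx
            · omega
            · exact hg.1 i x (Multiset.mem_of_mem_erase hx)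
          · exact hg.1 i x (by rwa [Function.update_of_ne h] at hx)
        · rw [sum_update_eq]
          have hνsum : ν.sum = (b - 1) + ((g hi).erase b).sum := by
            rw [hν, Multiset.sum_cons]
          have := hg.2
          omega
        · left
          refine ⟨hi, by simpa using hν0, ?_, Or.inl ⟨?_, ?_⟩⟩
          · intro j hj
            rw [Function.update_of_ne (ne_of_gt hj), h2 j hj]
          · intro j hj
            rw [Function.update_of_ne hj]
          · right
            refine ⟨b - 1, ?_, ?_, ?_⟩
            · rw [Function.update_self, hν]
              exact Multiset.mem_cons_self _ _
            · intro c hc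
              rw [Function.update_self, hν, Multiset.mem_cons] at hc
              rcases hc with rfl | hc
              · exact le_rfl
              · have := hbmin c (Multiset.mem_of_mem_erase hc)
                omega
            · rw [Function.update_self, hν, Multiset.erase_cons_head]
              have : b - 1 + 1 = b := by omega
              rw [this, hcons]
end
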